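/- Consider n players with private strategy sets S_i ⊆ ℝ^{d_i} that are closed and convex, convex differentiable costs J_i : ℝ^{d_i} → ℝ with gradients ∇J_i, and an interaction graph given by a symmetric irreflexive relation E on {1,…,n}; for each (i,j) ∈ E there is an affine coupled constraint map h_{i,j} : ℝ^{d_i} × ℝ^{d_j} → ℝ^{q} satisfying the symmetry h_{i,j}(x, y) = h_{j,i}(y, x). Let K = {s | s_i ∈ S_i for all i, and h_{i,j}(s_i, s_j) ≤ 0 componentwise for all (i,j) ∈ E}. Suppose s* ∈ K and there exist multipliers λ_{i,j} ∈ ℝ^{q} for all (i,j) ∈ E such that for all (i,j) ∈ E: λ_{i,j} ≥ 0 componentwise, λ_{i,j} = λ_{j,i}, ⟨λ_{i,j}, h_{i,j}(s*_i, s*_j)⟩ = 0, and the per-player stationarity condition holds: for every i and every y ∈ S_i, ⟨∇J_i(s*_i) + Σ_{j : (i,j) ∈ E} (D_x h_{i,j}(s*_i, s*_j))ᵀ λ_{i,j}, y − s*_i⟩ ≥ 0, where D_x h_{i,j} denotes the Jacobian of h_{i,j} with respect to its first argument. Then s* is a variational equilibrium: Σ_{i=1}^n ⟨∇J_i(s_i),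 s_i − s*_i⟩ ≥ 0 for every s ∈ K. -/

import Mathlib

open Matrix

/-- The continuous linear map `w ↦ ⟨g, w⟩` on `ℝᵐ`. -/
noncomputable def dotCLM {m : ℕ} (g : Fin m → ℝ) : (Fin m → ℝ) →L[ℝ] ℝ :=
  ∑ j, g j • ContinuousLinearMap.proj j

lemma dotCLM_apply {m : ℕ} (g w : Fin m → ℝ) : dotCLM g w = g ⬝ᵥ w := by
  simp [dotCLM, dotProduct, ContinuousLinearMap.sum_apply, smul_eq_mul]

/-- Gradient inequality for a convex differentiable function. -/
lemma grad_le_sub {m : ℕ} (f : (Fin m → ℝ) → ℝ) (g : (Fin m → ℝ) → (Fin m → ℝ))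
    (hconv : ConvexOn ℝ Set.univ f) (hgrad : ∀ x, HasFDerivAt f (dotCLM (g x)) x)
    (x y : Fin m → ℝ) : g x ⬝ᵥ (y - x) ≤ f y - f x := by
  set γ : ℝ → (Fin m → ℝ) := fun t => x + t • (y - x) with hγdef
  have hγ : ∀ t : ℝ, HasDerivAt γ (y - x) t := by
    intro t
    have h1 : HasDerivAt (fun t : ℝ => t • (y - x)) (y - x) t := by
      simpa using (hasDerivAt_id t).smul_const (y - x)
    simpa [hγdef] using h1.const_add x
  have hφ : ∀ t : ℝ, HasDerivAt (fun t => f (γ t)) (g (γ t) ⬝ᵥ (y - x)) t := by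
    intro t
    have := (hgrad (γ t)).comp_hasDerivAt t (hγ t)
    simpa [dotCLM_apply, Function.comp_def] using this
  have hline : γ = fun t => AffineMap.lineMap x y t := by
    funext t
    simp [hγdef, AffineMap.lineMap_apply, smul_sub]; abel
  have hconvφ : ConvexOn ℝ Set.univ (fun t => f (γ t)) := by
    rw [hline]
    have := hconv.comp_affineMap (AffineMap.lineMap x y : ℝ →ᵃ[ℝ] (Fin m → ℝ))
    simpa [Function.comp_def] using this
  have hslope := hconvφ.le_slope_of_hasDerivAt (Set.mem_univ (0:ℝ)) (Set.mem_univ (1:ℝ))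
    one_pos (hφ 0)
  have : slope (fun t => f (γ t)) 0 1 = f y - f x := by
    simp [slope_def_field, hγdef]
  rw [this] at hslope
  simpa [hγdef] using hslope

/-- A sum of vectors dotted with a vector. -/
lemma sum_dot {ι : Type*} {k : ℕ} (t : Finset ι) (f : ι → (Fin k → ℝ)) (w : Fin k → ℝ) :
    (∑ j ∈ t, f j) ⬝ᵥ w = ∑ j ∈ t, f j ⬝ᵥ w := by
  simp only [dotProduct, Finset.sum_apply, Finset.sum_mul]
  rw [Finset.sum_comm]

lemma dot_nonpos {k : ℕ} {a b : Fin k → ℝ} (ha : 0 ≤ a) (hb : b ≤ 0) : a ⬝ᵥ b ≤ 0 := by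
  apply Finset.sum_nonpos
  intro j _
  exact mul_nonpos_of_nonneg_of_nonpos (ha j) (hb j)

/-- Sufficiency content of Theorems 2 and 3(2): if a strategy profile `s*`,
feasible for the game with pairwise affine coupled constraints
`h_{i,j}(x, y) = A_{i,j} x + B_{i,j} y + c_{i,j} ≤ 0` (symmetric in the sense
`h_{i,j}(x,y) = h_{j,i}(y,x)`), satisfies the per-player KKT conditions with
nonnegative, complementary, and pairwise-equal multipliers `λ_{i,j} = λ_{j,i}`,
then `s*` is a variational equilibrium:
`Σ_i ⟨∇J_i(s_i), s_i − s*_i⟩ ≥ 0` for every feasible `s ∈ K`. -/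
theorem fair_KKT_point_is_variational_equilibrium
    {n q : ℕ} (d : Fin n → ℕ)
    (S : ∀ i, Set (Fin (d i) → ℝ))
    (hSclosed : ∀ i, IsClosed (S i)) (hSconvex : ∀ i, Convex ℝ (S i))
    (J : ∀ i, (Fin (d i) → ℝ) → ℝ)
    (gradJ : ∀ i, (Fin (d i) → ℝ) → (Fin (d i) → ℝ))
    (hconv : ∀ i, ConvexOn ℝ Set.univ (J i))
    (hgrad : ∀ i x, HasFDerivAt (J i) (dotCLM (gradJ i x)) x)
    (E : Fin n → Fin n → Prop) [DecidableRel E]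
    (hEsymm : ∀ i j, E i j → E j i) (hEirr : ∀ i, ¬ E i i)
    (A : ∀ i j, Matrix (Fin q) (Fin (d i)) ℝ)
    (B : ∀ i j, Matrix (Fin q) (Fin (d j)) ℝ)
    (c : Fin n → Fin n → (Fin q → ℝ))
    (hsymmh : ∀ (i j : Fin n) (x : Fin (d i) → ℝ) (y : Fin (d j) → ℝ),
      A i j *ᵥ x + B i j *ᵥ y + c i j = A j i *ᵥ y + B j i *ᵥ x + c j i)
    (sstar : ∀ i, Fin (d i) → ℝ)
    (lam : ∀ i j : Fin n, Fin q → ℝ)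
    (hfeasS : ∀ i, sstar i ∈ S i)
    (hfeash : ∀ i j, E i j → A i j *ᵥ sstar i + B i j *ᵥ sstar j + c i j ≤ 0)
    (hlampos : ∀ i j, E i j → 0 ≤ lam i j)
    (hlamsym : ∀ i j, E i j → lam i j = lam j i)
    (hcomp : ∀ i j, E i j →
      lam i j ⬝ᵥ (A i j *ᵥ sstar i + B i j *ᵥ sstar j + c i j) = 0)
    (hstat : ∀ i, ∀ y ∈ S i,
      0 ≤ (gradJ i (sstar i) +
            ∑ j ∈ Finset.univ.filter (fun j => E i j), (A i j)ᵀ *ᵥ lam i j)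
          ⬝ᵥ (y - sstar i)) :
    ∀ s : (∀ i, Fin (d i) → ℝ),
      (∀ i, s i ∈ S i) →
      (∀ i j, E i j → A i j *ᵥ s i + B i j *ᵥ s j + c i j ≤ 0) →
      0 ≤ ∑ i, gradJ i (s i) ⬝ᵥ (s i - sstar i) := by
  intro s hs hfeas
  -- symmetry consequences
  have hc : ∀ i j, c i j = c j i := by
    intro i j
    have := hsymmh i j 0 0
    simpa [Matrix.mulVec_zero] using this
  have hAB : ∀ i j (x : Fin (d i) → ℝ), A i j *ᵥ x = B j i *ᵥ x := by
    intro i j x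
    have := hsymmh i j x 0
    rw [hc i j] at this
    simpa [Matrix.mulVec_zero, add_left_inj] using this
  -- per-player gradient monotonicity
  have key1 : ∀ i, gradJ i (sstar i) ⬝ᵥ (s i - sstar i) ≤ gradJ i (s i) ⬝ᵥ (s i - sstar i) := by
    intro i
    have h1 := grad_le_sub (J i) (gradJ i) (hconv i) (hgrad i) (sstar i) (s i)
    have h2 := grad_le_sub (J i) (gradJ i) (hconv i) (hgrad i) (s i) (sstar i)
    have hneg : gradJ i (s i) ⬝ᵥ (sstar i - s i) = -(gradJ i (s i) ⬝ᵥ (s i - sstar i)) := by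
      rw [show sstar i - s i = -(s i - sstar i) from (neg_sub _ _).symm, dotProduct_neg]
    rw [hneg] at h2
    linarith
  -- the coupled-constraint term is nonpositive
  have hFsum : ∑ i, ∑ j ∈ Finset.univ.filter (fun j => E i j),
      lam i j ⬝ᵥ (A i j *ᵥ (s i - sstar i)) ≤ 0 := by
    set F : Fin n → Fin n → ℝ := fun i j =>
      if E i j then lam i j ⬝ᵥ (A i j *ᵥ (s i - sstar i)) else 0 with hF
    set G : Fin n → Fin n → ℝ := fun i j =>
      if E i j then lam i j ⬝ᵥ (B i j *ᵥ (s j - sstar j)) else 0 with hG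
    have hrw : ∀ i, (∑ j ∈ Finset.univ.filter (fun j => E i j),
        lam i j ⬝ᵥ (A i j *ᵥ (s i - sstar i))) = ∑ j, F i j := by
      intro i; rw [Finset.sum_filter]
    have hswap : ∀ i j, G i j = F j i := by
      intro i j
      by_cases h : E i j
      · have h' : E j i := hEsymm i j h
        simp only [hF, hG, if_pos h, if_pos h']
        rw [hlamsym i j h, hAB j i (s j - sstar j)]
      · have h' : ¬ E j i := fun hji => h (hEsymm j i hji)
        simp [hF, hG, h, h']
    have hGF : ∑ i, ∑ j, G i j = ∑ i, ∑ j, F i j := by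
      calc ∑ i, ∑ j, G i j = ∑ i, ∑ j, F j i := by
            simp_rw [hswap]
        _ = ∑ j, ∑ i, F j i := Finset.sum_comm
    have hpair : ∀ i j, F i j + G i j ≤ 0 := by
      intro i j
      by_cases h : E i j
      · simp only [hF, hG, if_pos h]
        have hlin : A i j *ᵥ (s i - sstar i) + B i j *ᵥ (s j - sstar j) =
            (A i j *ᵥ s i + B i j *ᵥ s j + c i j)
              - (A i j *ᵥ sstar i + B i j *ᵥ sstar j + c i j) := by
          rw [Matrix.mulVec_sub, Matrix.mulVec_sub]; abel
        have : lam i j ⬝ᵥ (A i j *ᵥ (s i - sstar i)) + lam i j ⬝ᵥ (B i j *ᵥ (s j - sstar j)) =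
            lam i j ⬝ᵥ (A i j *ᵥ s i + B i j *ᵥ s j + c i j) := by
          rw [← dotProduct_add, hlin, dotProduct_sub, hcomp i j h, sub_zero]
        rw [this]
        exact dot_nonpos (hlampos i j h) (hfeas i j h)
      · simp [hF, hG, h]
    have h2F : 2 * (∑ i, ∑ j, F i j) ≤ 0 := by
      have : ∑ i, ∑ j, F i j + ∑ i, ∑ j, G i j ≤ 0 := by
        rw [← Finset.sum_add_distrib]
        apply Finset.sum_nonpos
        intro i _
        rw [← Finset.sum_add_distrib]
        exact Finset.sum_nonpos fun j _ => hpair i j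
      linarith [hGF]
    simp_rw [hrw]
    linarith
  -- sum the stationarity conditions
  have key2 : 0 ≤ ∑ i, gradJ i (sstar i) ⬝ᵥ (s i - sstar i) := by
    have hstat' : ∀ i, 0 ≤ gradJ i (sstar i) ⬝ᵥ (s i - sstar i) +
        ∑ j ∈ Finset.univ.filter (fun j => E i j),
          lam i j ⬝ᵥ (A i j *ᵥ (s i - sstar i)) := by
      intro i
      have h := hstat i (s i) (hs i)
      rw [add_dotProduct, sum_dot] at h
      have heq : ∀ j, ((A i j)ᵀ *ᵥ lam i j) ⬝ᵥ (s i - sstar i) =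
          lam i j ⬝ᵥ (A i j *ᵥ (s i - sstar i)) := by
        intro j
        rw [Matrix.mulVec_transpose, Matrix.dotProduct_mulVec]
      simp_rw [heq] at h
      exact h
    have := Finset.sum_nonneg (fun i (_ : i ∈ Finset.univ) => hstat' i)
    rw [Finset.sum_add_distrib] at this
    linarith [hFsum]
  calc (0:ℝ) ≤ ∑ i, gradJ i (sstar i) ⬝ᵥ (s i - sstar i) := key2
    _ ≤ ∑ i, gradJ i (s i) ⬝ᵥ (s i - sstar i) :=
        Finset.sum_le_sum fun i _ => key1 i
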